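/- Let 1 < p_1 < ∞ and p_1' = p_1/(p_1 − 1). Define the weight w_1 on ℝ by w_1(x) = 1/(|x| (log(e/|x|))^2) for |x| ≤ 1 and w_1(x) = 1 for |x| > 1. Then the weight σ_1 = w_1^{1−p_1'} belongs to A_{2p_1'}. -/

import Mathlib

open MeasureTheory ENNReal

noncomputable section

/-- A (nondegenerate, compact) interval in `ℝ`. -/
def IsIntervalR (I : Set ℝ) : Prop := ∃ (c h : ℝ), 0 < h ∧ I = Set.Icc c (c + h)

/-- The average `⨍_I f dx` of a (nonnegative) function over a set,
computed with the Lebesgue integral, valued in `ℝ≥0∞`. -/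
def avgI (I : Set ℝ) (f : ℝ → ℝ) : ℝ≥0∞ :=
  (volume I)⁻¹ * ∫⁻ x in I, ENNReal.ofReal (f x)

/-- The Muckenhoupt class `A_p` on `ℝ` for `1 < p < ∞`. -/
def MuckApI (p : ℝ) (w : ℝ → ℝ) : Prop :=
  ∃ C : ℝ≥0∞, C ≠ ⊤ ∧ ∀ I : Set ℝ, IsIntervalR I →
    avgI I w * (avgI I fun x => w x ^ (1 - p / (p - 1))) ^ (p - 1) ≤ C

/-- The reverse Hölder class `RH_s` on `ℝ` for `1 < s < ∞`. -/
def RevHolderI (s : ℝ) (w : ℝ → ℝ) : Prop :=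
  ∃ C : ℝ≥0∞, C ≠ ⊤ ∧ ∀ I : Set ℝ, IsIntervalR I →
    (avgI I fun x => w x ^ s) ^ (1 / s) ≤ C * avgI I w

namespace DWaux

noncomputable def m (t : ℝ) : ℝ :=
  if t ≤ 1 then t * Real.log (Real.exp 1 / t) ^ (2 : ℕ) else 1

lemma log_ediv {t : ℝ} (ht : 0 < t) :
    Real.log (Real.exp 1 / t) = 1 - Real.log t := by
  rw [Real.log_div (Real.exp_ne_zero 1) (ne_of_gt ht), Real.log_exp]

lemma L_ge_one {t : ℝ} (ht : 0 < t) (ht1 : t ≤ 1) :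
    1 ≤ Real.log (Real.exp 1 / t) := by
  rw [log_ediv ht]
  have := Real.log_nonpos ht.le ht1
  linarith

lemma m_pos {t : ℝ} (ht : 0 < t) : 0 < m t := by
  unfold m
  split_ifs with h1
  · have hL := L_ge_one ht h1
    have : (0:ℝ) < Real.log (Real.exp 1 / t) ^ (2:ℕ) := by positivity
    exact mul_pos ht this
  · exact one_pos

lemma m_nonneg {t : ℝ} (ht : 0 ≤ t) : 0 ≤ m t := by
  rcases eq_or_lt_of_le ht with h | h
  · unfold m; rw [← h]; norm_num
  · exact (m_pos h).le

lemma core {x : ℝ} (hx : 0 < x) (hx1 : x ≤ 1) :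
    x * (1 - Real.log x) ^ (2 : ℕ) ≤ 3 / 2 := by
  set u := 1 - Real.log x with hu
  have hu1 : 1 ≤ u := by
    have := Real.log_nonpos hx.le hx1
    simp only [hu]; linarith
  have hx_eq : x = Real.exp (1 - u) := by
    rw [hu]; ring_nf; rw [Real.exp_log hx]
  have key : u / 2 ≤ Real.exp (u / 2 - 1) := by
    have := Real.add_one_le_exp (u / 2 - 1); linarith
  have he : Real.exp (u / 2 - 1) * Real.exp (u / 2 - 1) = Real.exp (u - 2) := by
    rw [← Real.exp_add]; ring_nf
  have key2 : u ^ 2 ≤ 4 * Real.exp (u - 2) := by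
    have h0 : (0 : ℝ) ≤ u / 2 := by linarith
    have := mul_self_le_mul_self h0 key
    nlinarith
  have hmain : x * u ^ 2 ≤ 4 * Real.exp (-1) := by
    rw [hx_eq]
    have h1 : Real.exp (1 - u) * u ^ 2 ≤ Real.exp (1 - u) * (4 * Real.exp (u - 2)) :=
      mul_le_mul_of_nonneg_left key2 (Real.exp_nonneg _)
    have h2 : Real.exp (1 - u) * (4 * Real.exp (u - 2)) = 4 * Real.exp (-1) := by
      rw [mul_comm, mul_assoc, ← Real.exp_add]; ring_nf
    linarith
  have hexp : Real.exp (-1) ≤ 3 / 8 := by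
    rw [Real.exp_neg]
    have h9 := Real.exp_one_gt_d9
    have h83 : (8:ℝ)/3 ≤ Real.exp 1 := by nlinarith
    have := inv_anti₀ (show (0:ℝ) < 8/3 by norm_num) h83
    calc (Real.exp 1)⁻¹ ≤ ((8:ℝ)/3)⁻¹ := this
    _ ≤ 3/8 := by norm_num
  calc x * u ^ 2 ≤ 4 * Real.exp (-1) := hmain
  _ ≤ 4 * (3/8) := by linarith
  _ ≤ 3/2 := by norm_num

lemma m_le {t : ℝ} (ht : 0 < t) : m t ≤ 3 / 2 := by
  unfold m
  split_ifs with h1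
  · rw [log_ediv ht]; exact core ht h1
  · norm_num

lemma m_mono {t s : ℝ} (ht : 0 < t) (hts : t ≤ s) : m t ≤ 3 / 2 * m s := by
  have hs : 0 < s := lt_of_lt_of_le ht hts
  by_cases hs1 : s ≤ 1
  · have ht1 : t ≤ 1 := le_trans hts hs1
    have hmt : m t = t * (1 - Real.log t) ^ (2:ℕ) := by
      rw [m, if_pos ht1, log_ediv ht]
    have hms : m s = s * (1 - Real.log s) ^ (2:ℕ) := by
      rw [m, if_pos hs1, log_ediv hs]
    rw [hmt, hms]
    set B := 1 - Real.log s with hB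
    have hB1 : 1 ≤ B := by
      have := Real.log_nonpos hs.le hs1; simp only [hB]; linarith
    have hD : Real.log t ≤ Real.log s := Real.log_le_log ht hts
    set D := Real.log s - Real.log t with hDdef
    have hD0 : 0 ≤ D := by simp only [hDdef]; linarith
    have hcore : (t / s) * (1 - Real.log (t / s)) ^ (2 : ℕ) ≤ 3 / 2 :=
      core (by positivity) (by rw [div_le_one hs]; exact hts)
    have hE : 1 - Real.log (t / s) = 1 + D := by
      rw [Real.log_div (ne_of_gt ht) (ne_of_gt hs)]; simp only [hDdef]; ring
    rw [hE] at hcore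
    have hcore' : t * (1 + D) ^ (2:ℕ) ≤ 3 / 2 * s := by
      have h1 := mul_le_mul_of_nonneg_left hcore hs.le
      have h2 : s * (t / s * (1 + D) ^ (2:ℕ)) = t * (1 + D) ^ (2:ℕ) := by
        field_simp
      nlinarith [h1, h2]
    have h1lt : 1 - Real.log t = B + D := by simp only [hB, hDdef]; ring
    rw [h1lt]
    have hBD : B + D ≤ B * (1 + D) := by nlinarith
    have hBD0 : 0 ≤ B + D := by linarith
    have hsq : (B + D) ^ (2:ℕ) ≤ (B * (1 + D)) ^ (2:ℕ) := by
      nlinarith [mul_self_le_mul_self hBD0 hBD]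
    calc t * (B + D) ^ (2:ℕ) ≤ t * (B * (1 + D)) ^ (2:ℕ) :=
          mul_le_mul_of_nonneg_left hsq ht.le
    _ = B ^ (2:ℕ) * (t * (1 + D) ^ (2:ℕ)) := by ring
    _ ≤ B ^ (2:ℕ) * (3 / 2 * s) := by
          apply mul_le_mul_of_nonneg_left hcore' (by positivity)
    _ = 3 / 2 * (s * B ^ (2:ℕ)) := by ring
  · have hms : m s = 1 := by rw [m, if_neg hs1]
    rw [hms]
    have := m_le ht; linarith

lemma m_double {a : ℝ} (ha : 0 < a) : m (2 * a) ≤ 2 * m a := by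
  by_cases h2 : 2 * a ≤ 1
  · have ha1 : a ≤ 1 := by linarith
    have hm2 : m (2*a) = 2*a * Real.log (Real.exp 1 / (2*a)) ^ (2:ℕ) := by
      rw [m, if_pos h2]
    have hma : m a = a * Real.log (Real.exp 1 / a) ^ (2:ℕ) := by
      rw [m, if_pos ha1]
    rw [hm2, hma]
    have hL2 : 1 ≤ Real.log (Real.exp 1 / (2 * a)) := L_ge_one (by linarith) h2
    have hLle : Real.log (Real.exp 1 / (2 * a)) ≤ Real.log (Real.exp 1 / a) := by
      apply Real.log_le_log (by positivity)
      apply div_le_div_of_nonneg_left (Real.exp_pos 1).le ha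
      linarith
    have hsq : Real.log (Real.exp 1 / (2 * a)) ^ (2:ℕ) ≤ Real.log (Real.exp 1 / a) ^ (2:ℕ) := by
      nlinarith
    nlinarith [mul_le_mul_of_nonneg_left hsq ha.le]
  · have hm2 : m (2*a) = 1 := by rw [m, if_neg h2]
    rw [hm2]
    by_cases ha1 : a ≤ 1
    · have hma : m a = a * Real.log (Real.exp 1 / a) ^ (2:ℕ) := by rw [m, if_pos ha1]
      have hL : 1 ≤ Real.log (Real.exp 1 / a) := L_ge_one ha ha1
      rw [hma]; nlinarith
    · have hma : m a = 1 := by rw [m, if_neg ha1]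
      rw [hma]; norm_num


lemma m_eq_of_le {t : ℝ} (ht1 : t ≤ 1) : m t = t * Real.log (Real.exp 1 / t) ^ (2:ℕ) := by
  rw [m, if_pos ht1]

lemma m_eq_of_gt {t : ℝ} (ht1 : ¬ t ≤ 1) : m t = 1 := by
  rw [m, if_neg ht1]

lemma m_zero : m 0 = 0 := by
  rw [m, if_pos (by norm_num : (0:ℝ) ≤ 1)]; ring

lemma int_rpow_neg {α s : ℝ} (hα0 : 0 < α) (hα1 : α < 1) (hs : 0 < s) :
    ∫⁻ t in Set.Ioc 0 s, ENNReal.ofReal (t ^ (-α)) ≤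
      ENNReal.ofReal (s ^ (1 - α) / (1 - α)) := by
  have hexp : (-1 : ℝ) < -α := by linarith
  have hint : IntervalIntegrable (fun t : ℝ => t ^ (-α)) volume 0 s :=
    intervalIntegral.intervalIntegrable_rpow' hexp
  have hIntOn : IntegrableOn (fun t : ℝ => t ^ (-α)) (Set.Ioc 0 s) volume :=
    (intervalIntegrable_iff_integrableOn_Ioc_of_le hs.le).mp hint
  have hnn : 0 ≤ᵐ[volume.restrict (Set.Ioc 0 s)] fun t : ℝ => t ^ (-α) := by
    refine (ae_restrict_iff' measurableSet_Ioc).2 (ae_of_all _ fun t ht => ?_)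
    exact Real.rpow_nonneg ht.1.le _
  rw [← ofReal_integral_eq_lintegral_ofReal hIntOn hnn]
  apply ENNReal.ofReal_le_ofReal
  have heq : ∫ t in Set.Ioc 0 s, t ^ (-α) = ∫ t in (0:ℝ)..s, t ^ (-α) :=
    (intervalIntegral.integral_of_le hs.le).symm
  rw [heq, integral_rpow (Or.inl hexp)]
  have h0 : (0:ℝ) ^ (-α + 1) = 0 := Real.zero_rpow (by linarith)
  rw [h0]
  rw [show -α + 1 = 1 - α by ring]
  apply le_of_eq; ring

lemma int_m_neg_of_le {α s : ℝ} (hα0 : 0 < α) (hα : α ≤ 1/2) (hs : 0 < s) (hs1 : s ≤ 1) :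
    ∫⁻ t in Set.Ioc 0 s, ENNReal.ofReal (m t ^ (-α)) ≤
      ENNReal.ofReal (3 * s * m s ^ (-α)) := by
  have hα1 : α < 1 := by linarith
  set B := Real.log (Real.exp 1 / s) with hBdef
  have hB1 : 1 ≤ B := L_ge_one hs hs1
  have hB2 : (0:ℝ) < B ^ (2:ℕ) := by positivity
  -- pointwise bound
  have hpt : ∀ t ∈ Set.Ioc 0 s, ENNReal.ofReal (m t ^ (-α)) ≤
      ENNReal.ofReal ((B ^ (2:ℕ)) ^ (-α) * t ^ (-α)) := by
    intro t ht
    obtain ⟨ht0, hts⟩ := ht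
    apply ENNReal.ofReal_le_ofReal
    have ht1 : t ≤ 1 := le_trans hts hs1
    have hLt : B ≤ Real.log (Real.exp 1 / t) := by
      rw [hBdef]
      apply Real.log_le_log (by positivity)
      apply div_le_div_of_nonneg_left (Real.exp_pos 1).le ht0 hts
    have hlow : t * B ^ (2:ℕ) ≤ m t := by
      rw [m_eq_of_le ht1]
      have : B ^ (2:ℕ) ≤ Real.log (Real.exp 1 / t) ^ (2:ℕ) := by nlinarith
      nlinarith
    have h1 : m t ^ (-α) ≤ (t * B ^ (2:ℕ)) ^ (-α) :=
      Real.rpow_le_rpow_of_nonpos (by positivity) hlow (by linarith)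
    calc m t ^ (-α) ≤ (t * B ^ (2:ℕ)) ^ (-α) := h1
    _ = t ^ (-α) * (B ^ (2:ℕ)) ^ (-α) := Real.mul_rpow ht0.le hB2.le
    _ = (B ^ (2:ℕ)) ^ (-α) * t ^ (-α) := by ring
  calc ∫⁻ t in Set.Ioc 0 s, ENNReal.ofReal (m t ^ (-α))
      ≤ ∫⁻ t in Set.Ioc 0 s, ENNReal.ofReal ((B ^ (2:ℕ)) ^ (-α) * t ^ (-α)) :=
        setLIntegral_mono' measurableSet_Ioc hpt
  _ = ∫⁻ t in Set.Ioc 0 s, ENNReal.ofReal ((B ^ (2:ℕ)) ^ (-α)) * ENNReal.ofReal (t ^ (-α)) := by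
        apply lintegral_congr fun t => ENNReal.ofReal_mul (by positivity)
  _ = ENNReal.ofReal ((B ^ (2:ℕ)) ^ (-α)) * ∫⁻ t in Set.Ioc 0 s, ENNReal.ofReal (t ^ (-α)) :=
        lintegral_const_mul' _ _ ENNReal.ofReal_ne_top
  _ ≤ ENNReal.ofReal ((B ^ (2:ℕ)) ^ (-α)) * ENNReal.ofReal (s ^ (1 - α) / (1 - α)) := by
        exact mul_le_mul_right (int_rpow_neg hα0 hα1 hs) _
  _ = ENNReal.ofReal ((B ^ (2:ℕ)) ^ (-α) * (s ^ (1 - α) / (1 - α))) :=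
        (ENNReal.ofReal_mul (by positivity)).symm
  _ ≤ ENNReal.ofReal (3 * s * m s ^ (-α)) := by
        apply ENNReal.ofReal_le_ofReal
        rw [m_eq_of_le hs1, ← hBdef]
        rw [Real.mul_rpow hs.le hB2.le]
        have hsplit : s ^ (1 - α) = s * s ^ (-α) := by
          rw [show (1 - α) = 1 + (-α) by ring, Real.rpow_add hs, Real.rpow_one]
        rw [hsplit]
        have hfrac : 1 / (1 - α) ≤ 2 := by
          rw [div_le_iff₀ (by linarith)]; linarith
        have h1 : (0:ℝ) ≤ (B ^ (2:ℕ)) ^ (-α) := Real.rpow_nonneg hB2.le _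
        have h2 : (0:ℝ) ≤ s ^ (-α) := Real.rpow_nonneg hs.le _
        have key : (B ^ (2:ℕ)) ^ (-α) * (s * s ^ (-α)) * (1/(1-α)) ≤
            (B ^ (2:ℕ)) ^ (-α) * (s * s ^ (-α)) * 2 := by
          apply mul_le_mul_of_nonneg_left hfrac (by positivity)
        calc (B ^ (2:ℕ)) ^ (-α) * (s * s ^ (-α) / (1 - α))
            = (B ^ (2:ℕ)) ^ (-α) * (s * s ^ (-α)) * (1/(1-α)) := by ring
        _ ≤ (B ^ (2:ℕ)) ^ (-α) * (s * s ^ (-α)) * 2 := key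
        _ ≤ 3 * s * (s ^ (-α) * (B ^ (2:ℕ)) ^ (-α)) := by
              nlinarith [mul_nonneg h2 h1, mul_nonneg (mul_nonneg hs.le h2) h1]

lemma m_one : m 1 = 1 := by
  rw [m_eq_of_le le_rfl, div_one, Real.log_exp]; norm_num

lemma int_m_neg {α s : ℝ} (hα0 : 0 < α) (hα : α ≤ 1/2) (hs : 0 < s) :
    ∫⁻ t in Set.Ioc 0 s, ENNReal.ofReal (m t ^ (-α)) ≤
      ENNReal.ofReal (3 * s * m s ^ (-α)) := by
  by_cases hs1 : s ≤ 1
  · exact int_m_neg_of_le hα0 hα hs hs1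
  · push_neg at hs1
    have hms : m s = 1 := m_eq_of_gt (not_le.mpr hs1)
    have hsplit : Set.Ioc (0:ℝ) s = Set.Ioc 0 1 ∪ Set.Ioc 1 s :=
      (Set.Ioc_union_Ioc_eq_Ioc zero_le_one hs1.le).symm
    rw [hsplit, lintegral_union measurableSet_Ioc (Set.Ioc_disjoint_Ioc_of_le le_rfl)]
    have h1 : ∫⁻ t in Set.Ioc (0:ℝ) 1, ENNReal.ofReal (m t ^ (-α)) ≤ ENNReal.ofReal 3 := by
      have h := int_m_neg_of_le hα0 hα one_pos le_rfl
      simpa [m_one, Real.one_rpow] using h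
    have h2 : ∫⁻ t in Set.Ioc (1:ℝ) s, ENNReal.ofReal (m t ^ (-α)) = ENNReal.ofReal (s - 1) := by
      have : ∀ t ∈ Set.Ioc (1:ℝ) s, ENNReal.ofReal (m t ^ (-α)) = 1 := by
        intro t ht
        rw [m_eq_of_gt (not_le.mpr ht.1), Real.one_rpow, ENNReal.ofReal_one]
      rw [setLIntegral_congr_fun_ae measurableSet_Ioc (ae_of_all _ this)]
      simp [Real.volume_Ioc]
    rw [h2]
    calc (∫⁻ t in Set.Ioc (0:ℝ) 1, ENNReal.ofReal (m t ^ (-α))) + ENNReal.ofReal (s - 1)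
        ≤ ENNReal.ofReal 3 + ENNReal.ofReal (s - 1) := add_le_add_left h1 _
    _ = ENNReal.ofReal (3 + (s - 1)) := (ENNReal.ofReal_add (by norm_num) (by linarith)).symm
    _ ≤ ENNReal.ofReal (3 * s * m s ^ (-α)) := by
          apply ENNReal.ofReal_le_ofReal
          rw [hms, Real.one_rpow]
          linarith


lemma vol_Icc {c h : ℝ} : volume (Set.Icc c (c + h)) = ENNReal.ofReal h := by
  rw [Real.volume_Icc]; congr 1; ring

lemma avg_le_of_bound {c h : ℝ} (hh : 0 < h) {f g : ℝ → ℝ} {K : ℝ}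
    (hfg : ∀ᵐ x ∂(volume : Measure ℝ), ENNReal.ofReal (f x) = ENNReal.ofReal (g x))
    (hb : ∀ x ∈ Set.Icc c (c + h), ENNReal.ofReal (g x) ≤ ENNReal.ofReal K) :
    avgI (Set.Icc c (c + h)) f ≤ ENNReal.ofReal K := by
  unfold avgI
  have hcongr : ∫⁻ x in Set.Icc c (c + h), ENNReal.ofReal (f x)
      = ∫⁻ x in Set.Icc c (c + h), ENNReal.ofReal (g x) :=
    lintegral_congr_ae (ae_restrict_of_ae hfg)
  have hle : ∫⁻ x in Set.Icc c (c + h), ENNReal.ofReal (g x)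
      ≤ ENNReal.ofReal K * volume (Set.Icc c (c + h)) := by
    calc ∫⁻ x in Set.Icc c (c + h), ENNReal.ofReal (g x)
        ≤ ∫⁻ _ in Set.Icc c (c + h), ENNReal.ofReal K :=
          setLIntegral_mono' measurableSet_Icc hb
    _ = ENNReal.ofReal K * volume (Set.Icc c (c + h)) := setLIntegral_const _ _
  rw [hcongr, vol_Icc]
  have h0 : ENNReal.ofReal h ≠ 0 := by
    simp [ENNReal.ofReal_eq_zero]; linarith
  calc (ENNReal.ofReal h)⁻¹ * ∫⁻ x in Set.Icc c (c + h), ENNReal.ofReal (g x)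
      ≤ (ENNReal.ofReal h)⁻¹ * (ENNReal.ofReal K * ENNReal.ofReal h) := by
        rw [← vol_Icc (c := c)]; exact mul_le_mul_right hle _
  _ = ENNReal.ofReal K := by
        rw [mul_comm (ENNReal.ofReal K), ← mul_assoc,
          ENNReal.inv_mul_cancel h0 ENNReal.ofReal_ne_top, one_mul]

lemma avg_m_caseB {c h α : ℝ} (hh : 0 < h) (hα0 : 0 < α) (hα : α ≤ 1/2) {f : ℝ → ℝ}
    (hfg : ∀ᵐ x ∂(volume : Measure ℝ),
      ENNReal.ofReal (f x) = ENNReal.ofReal (m |x| ^ (-α)))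
    (hsub : Set.Icc c (c + h) ⊆ Set.Ioo (-(2 * h)) (2 * h)) :
    avgI (Set.Icc c (c + h)) f ≤ ENNReal.ofReal (12 * m (2 * h) ^ (-α)) := by
  unfold avgI
  have hcongr : ∫⁻ x in Set.Icc c (c + h), ENNReal.ofReal (f x)
      = ∫⁻ x in Set.Icc c (c + h), ENNReal.ofReal (m |x| ^ (-α)) :=
    lintegral_congr_ae (ae_restrict_of_ae hfg)
  -- the positive-side integral
  have hpos : ∫⁻ x in Set.Ioc 0 (2 * h), ENNReal.ofReal (m |x| ^ (-α))
      ≤ ENNReal.ofReal (3 * (2 * h) * m (2 * h) ^ (-α)) := by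
    have hcong : ∀ x ∈ Set.Ioc (0:ℝ) (2 * h),
        ENNReal.ofReal (m |x| ^ (-α)) = ENNReal.ofReal (m x ^ (-α)) := by
      intro x hx; rw [abs_of_pos hx.1]
    rw [setLIntegral_congr_fun_ae measurableSet_Ioc (ae_of_all _ hcong)]
    exact int_m_neg hα0 hα (by linarith)
  -- negative side equals positive side
  have hneg : ∫⁻ x in Set.Ico (-(2 * h)) 0, ENNReal.ofReal (m |x| ^ (-α))
      = ∫⁻ x in Set.Ioc 0 (2 * h), ENNReal.ofReal (m |x| ^ (-α)) := by
    have hpre : Set.Ico (-(2 * h)) 0 = Neg.neg ⁻¹' Set.Ioc (0:ℝ) (2 * h) := by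
      ext x
      simp only [Set.mem_Ico, Set.mem_preimage, Set.mem_Ioc]
      constructor
      · rintro ⟨h1, h2⟩; constructor <;> linarith
      · rintro ⟨h1, h2⟩; constructor <;> linarith
    rw [hpre]
    have := MeasurePreserving.setLIntegral_comp_preimage_emb
      (Measure.measurePreserving_neg (volume : Measure ℝ))
      (Homeomorph.neg ℝ).measurableEmbedding
      (fun x => ENNReal.ofReal (m |x| ^ (-α))) (Set.Ioc 0 (2 * h))
    simpa [abs_neg] using this
  -- combine
  have hM : (0:ℝ) ≤ m (2*h) ^ (-α) := Real.rpow_nonneg (m_nonneg (by linarith)) _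
  have hIle : ∫⁻ x in Set.Icc c (c + h), ENNReal.ofReal (m |x| ^ (-α))
      ≤ ENNReal.ofReal (12 * h * m (2 * h) ^ (-α)) := by
    have hsub2 : Set.Icc c (c + h) ⊆ Set.Ico (-(2 * h)) 0 ∪ Set.Icc 0 (2 * h) := by
      intro x hx
      rcases lt_or_ge x 0 with hx0 | hx0
      · left; exact ⟨(hsub hx).1.le, hx0⟩
      · right; exact ⟨hx0, (hsub hx).2.le⟩
    have hIcc : ∫⁻ x in Set.Icc (0:ℝ) (2 * h), ENNReal.ofReal (m |x| ^ (-α))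
        = ∫⁻ x in Set.Ioc (0:ℝ) (2 * h), ENNReal.ofReal (m |x| ^ (-α)) :=
      setLIntegral_congr (MeasureTheory.Ioc_ae_eq_Icc).symm
    calc ∫⁻ x in Set.Icc c (c + h), ENNReal.ofReal (m |x| ^ (-α))
        ≤ ∫⁻ x in Set.Ico (-(2 * h)) 0 ∪ Set.Icc 0 (2 * h),
            ENNReal.ofReal (m |x| ^ (-α)) := lintegral_mono_set hsub2
    _ ≤ (∫⁻ x in Set.Ico (-(2 * h)) 0, ENNReal.ofReal (m |x| ^ (-α)))
          + ∫⁻ x in Set.Icc (0:ℝ) (2 * h), ENNReal.ofReal (m |x| ^ (-α)) :=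
        lintegral_union_le _ _ _
    _ = (∫⁻ x in Set.Ioc (0:ℝ) (2 * h), ENNReal.ofReal (m |x| ^ (-α)))
          + ∫⁻ x in Set.Ioc (0:ℝ) (2 * h), ENNReal.ofReal (m |x| ^ (-α)) := by
        rw [hneg, hIcc]
    _ ≤ ENNReal.ofReal (3 * (2 * h) * m (2 * h) ^ (-α))
          + ENNReal.ofReal (3 * (2 * h) * m (2 * h) ^ (-α)) := add_le_add hpos hpos
    _ = ENNReal.ofReal (12 * h * m (2 * h) ^ (-α)) := by
        rw [← ENNReal.ofReal_add (by positivity) (by positivity)]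
        congr 1; ring
  rw [hcongr, vol_Icc]
  have h0 : ENNReal.ofReal h ≠ 0 := by
    simp [ENNReal.ofReal_eq_zero]; linarith
  have hsplitR : ENNReal.ofReal (12 * h * m (2 * h) ^ (-α))
      = ENNReal.ofReal h * ENNReal.ofReal (12 * m (2 * h) ^ (-α)) := by
    rw [← ENNReal.ofReal_mul hh.le]; congr 1; ring
  calc (ENNReal.ofReal h)⁻¹ * ∫⁻ x in Set.Icc c (c + h), ENNReal.ofReal (m |x| ^ (-α))
      ≤ (ENNReal.ofReal h)⁻¹ *
          (ENNReal.ofReal h * ENNReal.ofReal (12 * m (2 * h) ^ (-α))) := by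
        rw [← hsplitR]; exact mul_le_mul_right hIle _
  _ = ENNReal.ofReal (12 * m (2 * h) ^ (-α)) := by
        rw [← mul_assoc, ENNReal.inv_mul_cancel h0 ENNReal.ofReal_ne_top, one_mul]


end DWaux

/-- With `w₁(x) = 1/(|x| (log(e/|x|))²)` on `[-1,1]` and `1` elsewhere, the weight
`σ₁ = w₁^{1-p₁'}` belongs to `A_{2p₁'}`, where `p₁' = p₁/(p₁-1)`. -/
theorem dual_weight_in_A_two_p1prime (p₁ : ℝ) (hp₁ : 1 < p₁)
    (w₁ : ℝ → ℝ)
    (hw₁ : ∀ x, w₁ x = if |x| ≤ 1 then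
      1 / (|x| * Real.log (Real.exp 1 / |x|) ^ (2 : ℕ)) else 1) :
    MuckApI (2 * (p₁ / (p₁ - 1)))
      (fun x => w₁ x ^ (1 - p₁ / (p₁ - 1))) := by
  have hp : 0 < p₁ - 1 := by linarith
  set q := p₁ / (p₁ - 1) with hqdef
  have hq1 : 1 < q := by rw [hqdef, lt_div_iff₀ hp]; linarith
  set β := q - 1 with hβdef
  have hβ : 0 < β := by rw [hβdef]; linarith
  set r := 2 * β + 1 with hrdef
  have hr0 : (0:ℝ) < r := by rw [hrdef]; linarith
  have hr1 : (1:ℝ) ≤ r := by rw [hrdef]; linarith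
  have hr : 2 * q - 1 = r := by rw [hrdef, hβdef]; ring
  set α := β / r with hαdef
  have hα0 : 0 < α := div_pos hβ hr0
  have hα : α ≤ 1 / 2 := by
    rw [hαdef, div_le_iff₀ hr0, hrdef]; linarith
  have hαr : α * r = β := by rw [hαdef]; field_simp
  have he₁ : (1:ℝ) - q = -β := by rw [hβdef]; ring
  have hs₀ : β * (1 - 2 * q / r) = -α := by
    have hrne : r ≠ 0 := ne_of_gt hr0
    have : (1:ℝ) - 2 * q / r = -(1 / r) := by
      have h2qr : 2 * q = r + 1 := by rw [hrdef, hβdef]; ring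
      rw [h2qr]; field_simp; ring
    rw [this, hαdef]; field_simp
  -- pointwise identity for w₁
  have hwm : ∀ x : ℝ, x ≠ 0 → w₁ x = (DWaux.m |x|)⁻¹ := by
    intro x hx
    rw [hw₁ x, DWaux.m]
    split_ifs with h1
    · rw [one_div]
    · rw [inv_one]
  have hae0 : ∀ᵐ x ∂(volume : Measure ℝ), x ≠ 0 := by
    have hset : {x : ℝ | ¬ x ≠ 0} = {0} := by ext y; simp
    rw [ae_iff, hset, Real.volume_singleton]
  have hv : ∀ x : ℝ, x ≠ 0 → w₁ x ^ (1 - q) = DWaux.m |x| ^ β := by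
    intro x hx
    have hmx : 0 < DWaux.m |x| := DWaux.m_pos (abs_pos.mpr hx)
    rw [he₁, hwm x hx, Real.inv_rpow hmx.le, Real.rpow_neg hmx.le, inv_inv]
  have hae_v : ∀ᵐ x ∂(volume : Measure ℝ),
      ENNReal.ofReal (w₁ x ^ (1 - q)) = ENNReal.ofReal (DWaux.m |x| ^ β) := by
    filter_upwards [hae0] with x hx
    rw [hv x hx]
  have hae_vi : ∀ᵐ x ∂(volume : Measure ℝ),
      ENNReal.ofReal ((w₁ x ^ (1 - q)) ^ (1 - 2 * q / r))
        = ENNReal.ofReal (DWaux.m |x| ^ (-α)) := by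
    filter_upwards [hae0] with x hx
    rw [hv x hx, ← Real.rpow_mul (DWaux.m_nonneg (abs_nonneg x)), hs₀]
  rw [MuckApI]
  refine ⟨ENNReal.ofReal ((7:ℝ) ^ β * (12:ℝ) ^ r), ENNReal.ofReal_ne_top, ?_⟩
  rintro I ⟨c, h, hh, rfl⟩
  rw [hr]
  have h7 : (0:ℝ) ≤ (7:ℝ) ^ β := Real.rpow_nonneg (by norm_num) _
  have h12 : (1:ℝ) ≤ (12:ℝ) ^ r := Real.one_le_rpow (by norm_num) hr0.le
  by_cases hcase : ∀ x ∈ Set.Icc c (c + h), h ≤ |x|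
  · -- Case A : interval far from the origin
    have hcmem : c ∈ Set.Icc c (c + h) := ⟨le_refl c, by linarith⟩
    have hc2 : c + h ∈ Set.Icc c (c + h) := ⟨by linarith, le_refl _⟩
    set aa := min |c| |c + h| with haadef
    have haah : h ≤ aa := le_min (hcase c hcmem) (hcase _ hc2)
    have haa : 0 < aa := lt_of_lt_of_le hh haah
    have h0I : (0:ℝ) ∉ Set.Icc c (c + h) := by
      intro h0
      have := hcase 0 h0
      rw [abs_zero] at this
      linarith
    have hsigns : 0 < c ∨ c + h < 0 := by
      by_contra hcon
      push_neg at hcon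
      exact h0I ⟨hcon.1, hcon.2⟩
    have hlow : ∀ x ∈ Set.Icc c (c + h), aa ≤ |x| := by
      intro x hx
      rcases hsigns with hc0 | hch
      · have h1 : aa ≤ |c| := min_le_left _ _
        rw [abs_of_pos hc0] at h1
        have hxpos : 0 < x := lt_of_lt_of_le hc0 hx.1
        rw [abs_of_pos hxpos]
        linarith [hx.1]
      · have h1 : aa ≤ |c + h| := min_le_right _ _
        rw [abs_of_neg hch] at h1
        have hxneg : x < 0 := lt_of_le_of_lt hx.2 hch
        rw [abs_of_neg hxneg]
        linarith [hx.2]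
    have hup : ∀ x ∈ Set.Icc c (c + h), |x| ≤ aa + h := by
      intro x hx
      rcases hsigns with hc0 | hch
      · have heq : aa = c := by
          rw [haadef, abs_of_pos hc0, abs_of_pos (by linarith : 0 < c + h)]
          exact min_eq_left (by linarith)
        have hxpos : 0 < x := lt_of_lt_of_le hc0 hx.1
        rw [abs_of_pos hxpos, heq]
        linarith [hx.2]
      · have heq : aa = -(c + h) := by
          rw [haadef, abs_of_neg hch, abs_of_neg (by linarith : c < 0)]
          exact min_eq_right (by linarith)
        have hxneg : x < 0 := lt_of_le_of_lt hx.2 hch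
        rw [abs_of_neg hxneg, heq]
        linarith [hx.1]
    have hmaa : 0 < DWaux.m aa := DWaux.m_pos haa
    have hmaah : 0 ≤ DWaux.m (aa + h) := DWaux.m_nonneg (by linarith)
    have bv : avgI (Set.Icc c (c + h)) (fun x => w₁ x ^ (1 - q))
        ≤ ENNReal.ofReal ((3/2 * DWaux.m (aa + h)) ^ β) := by
      apply DWaux.avg_le_of_bound hh hae_v
      intro x hx
      apply ENNReal.ofReal_le_ofReal
      have hx0 : 0 < |x| := lt_of_lt_of_le haa (hlow x hx)
      exact Real.rpow_le_rpow (DWaux.m_nonneg (abs_nonneg x))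
        (DWaux.m_mono hx0 (hup x hx)) hβ.le
    have hbase : (0:ℝ) < 2/3 * DWaux.m aa := by positivity
    have bvi : avgI (Set.Icc c (c + h))
          (fun x => (w₁ x ^ (1 - q)) ^ (1 - 2 * q / r))
        ≤ ENNReal.ofReal ((2/3 * DWaux.m aa) ^ (-α)) := by
      apply DWaux.avg_le_of_bound hh hae_vi
      intro x hx
      apply ENNReal.ofReal_le_ofReal
      have h1 : DWaux.m aa ≤ 3/2 * DWaux.m |x| := DWaux.m_mono haa (hlow x hx)
      have h2 : 2/3 * DWaux.m aa ≤ DWaux.m |x| := by linarith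
      exact Real.rpow_le_rpow_of_nonpos hbase h2 (by linarith)
    have hBnn : (0:ℝ) ≤ (2/3 * DWaux.m aa) ^ (-α) := Real.rpow_nonneg hbase.le _
    calc avgI (Set.Icc c (c + h)) (fun x => w₁ x ^ (1 - q)) *
          (avgI (Set.Icc c (c + h))
            (fun x => (w₁ x ^ (1 - q)) ^ (1 - 2 * q / r))) ^ r
        ≤ ENNReal.ofReal ((3/2 * DWaux.m (aa + h)) ^ β) *
            (ENNReal.ofReal ((2/3 * DWaux.m aa) ^ (-α))) ^ r :=
          mul_le_mul' bv (ENNReal.rpow_le_rpow bvi hr0.le)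
    _ = ENNReal.ofReal ((3/2 * DWaux.m (aa + h)) ^ β *
            ((2/3 * DWaux.m aa) ^ (-α)) ^ r) := by
          rw [ENNReal.ofReal_rpow_of_nonneg hBnn hr0.le,
            ← ENNReal.ofReal_mul (Real.rpow_nonneg (by positivity) _)]
    _ ≤ ENNReal.ofReal ((7:ℝ) ^ β * (12:ℝ) ^ r) := by
          apply ENNReal.ofReal_le_ofReal
          have e1 : ((2/3 * DWaux.m aa) ^ (-α)) ^ r = (2/3 * DWaux.m aa) ^ (-β) := by
            rw [← Real.rpow_mul hbase.le]
            congr 1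
            rw [neg_mul, hαr]
          rw [e1, Real.rpow_neg hbase.le, ← div_eq_mul_inv,
            ← Real.div_rpow (by positivity) hbase.le]
          have hX : DWaux.m (aa + h) ≤ 3 * DWaux.m aa := by
            have h1 : DWaux.m (aa + h) ≤ 3/2 * DWaux.m (2 * aa) :=
              DWaux.m_mono (by linarith) (by linarith)
            have h2 : DWaux.m (2 * aa) ≤ 2 * DWaux.m aa := DWaux.m_double haa
            linarith
          have hdiv : (3/2 * DWaux.m (aa + h)) / (2/3 * DWaux.m aa) ≤ 7 := by
            rw [div_le_iff₀ hbase]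
            nlinarith
          calc ((3/2 * DWaux.m (aa + h)) / (2/3 * DWaux.m aa)) ^ β ≤ (7:ℝ) ^ β :=
                Real.rpow_le_rpow (by positivity) hdiv hβ.le
          _ ≤ (7:ℝ) ^ β * (12:ℝ) ^ r := le_mul_of_one_le_right h7 h12
  · -- Case B : interval close to the origin
    push_neg at hcase
    obtain ⟨x₀, hx₀I, hx₀⟩ := hcase
    have hup2 : ∀ x ∈ Set.Icc c (c + h), |x| < 2 * h := by
      intro x hx
      have h1 : |x - x₀| ≤ h := by
        rw [abs_sub_le_iff]
        constructor
        · linarith [hx.2, hx₀I.1]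
        · linarith [hx.1, hx₀I.2]
      calc |x| = |x₀ + (x - x₀)| := by ring_nf
      _ ≤ |x₀| + |x - x₀| := abs_add_le _ _
      _ < 2 * h := by linarith
    have hsub : Set.Icc c (c + h) ⊆ Set.Ioo (-(2 * h)) (2 * h) := by
      intro x hx
      exact Set.mem_Ioo.mpr (abs_lt.mp (hup2 x hx))
    have hm2h : 0 < DWaux.m (2 * h) := DWaux.m_pos (by linarith)
    have bv : avgI (Set.Icc c (c + h)) (fun x => w₁ x ^ (1 - q))
        ≤ ENNReal.ofReal ((3/2 * DWaux.m (2 * h)) ^ β) := by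
      apply DWaux.avg_le_of_bound hh hae_v
      intro x hx
      apply ENNReal.ofReal_le_ofReal
      by_cases hx0 : x = 0
      · subst hx0
        rw [abs_zero, DWaux.m_zero, Real.zero_rpow hβ.ne']
        positivity
      · exact Real.rpow_le_rpow (DWaux.m_nonneg (abs_nonneg x))
          (DWaux.m_mono (abs_pos.mpr hx0) (hup2 x hx).le) hβ.le
    have bvi : avgI (Set.Icc c (c + h))
          (fun x => (w₁ x ^ (1 - q)) ^ (1 - 2 * q / r))
        ≤ ENNReal.ofReal (12 * DWaux.m (2 * h) ^ (-α)) :=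
      DWaux.avg_m_caseB hh hα0 hα hae_vi hsub
    have hBnn : (0:ℝ) ≤ 12 * DWaux.m (2 * h) ^ (-α) := by positivity
    calc avgI (Set.Icc c (c + h)) (fun x => w₁ x ^ (1 - q)) *
          (avgI (Set.Icc c (c + h))
            (fun x => (w₁ x ^ (1 - q)) ^ (1 - 2 * q / r))) ^ r
        ≤ ENNReal.ofReal ((3/2 * DWaux.m (2 * h)) ^ β) *
            (ENNReal.ofReal (12 * DWaux.m (2 * h) ^ (-α))) ^ r :=
          mul_le_mul' bv (ENNReal.rpow_le_rpow bvi hr0.le)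
    _ = ENNReal.ofReal ((3/2 * DWaux.m (2 * h)) ^ β *
            (12 * DWaux.m (2 * h) ^ (-α)) ^ r) := by
          rw [ENNReal.ofReal_rpow_of_nonneg hBnn hr0.le,
            ← ENNReal.ofReal_mul (Real.rpow_nonneg (by positivity) _)]
    _ ≤ ENNReal.ofReal ((7:ℝ) ^ β * (12:ℝ) ^ r) := by
          apply ENNReal.ofReal_le_ofReal
          have e1 : (12 * DWaux.m (2 * h) ^ (-α)) ^ r
              = (12:ℝ) ^ r * DWaux.m (2 * h) ^ (-β) := by
            rw [Real.mul_rpow (by norm_num) (Real.rpow_nonneg hm2h.le _),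
              ← Real.rpow_mul hm2h.le]
            congr 2
            rw [neg_mul, hαr]
          have e2 : (3/2 * DWaux.m (2 * h)) ^ β
              = (3/2:ℝ) ^ β * DWaux.m (2 * h) ^ β := by
            rw [Real.mul_rpow (by norm_num) hm2h.le]
          rw [e1, e2]
          have e3 : DWaux.m (2 * h) ^ β * DWaux.m (2 * h) ^ (-β) = 1 := by
            rw [← Real.rpow_add hm2h]
            simp
          have e4 : (3/2:ℝ) ^ β * DWaux.m (2 * h) ^ β *
              ((12:ℝ) ^ r * DWaux.m (2 * h) ^ (-β))
              = (3/2:ℝ) ^ β * (12:ℝ) ^ r *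
                (DWaux.m (2 * h) ^ β * DWaux.m (2 * h) ^ (-β)) := by ring
          rw [e4, e3, mul_one]
          have h32 : (3/2:ℝ) ^ β ≤ (7:ℝ) ^ β :=
            Real.rpow_le_rpow (by norm_num) (by norm_num) hβ.le
          have h12nn : (0:ℝ) ≤ (12:ℝ) ^ r := by linarith
          nlinarith
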